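/- Let λ be a dominant coweight of SL_n with λ = Σ m_i α_{i*} (m_i ≥ 0 integers) and let k be a positive integer. Then λ ≤ k·n·ϖ_1 if and only if k ≥ m_1. In particular k = m_1 is the minimal integer with λ ≤ k n ϖ_1. -/

import Mathlib

/-- The `i`-th fundamental coweight `ϖ_i` of `SL_n`, as a vector in `ℚ^n`. -/
def varpi (n i : ℕ) : Fin n → ℚ :=
  fun j => if (j : ℕ) < i then 1 - (i : ℚ) / n else -((i : ℚ) / n)

/-- The `j`-th simple coroot `α_j = e_j - e_{j+1}` of `SL_n` (1-based `j`). -/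
def alphaC (n j : ℕ) : Fin n → ℚ :=
  fun x => (if (x : ℕ) = j - 1 then 1 else 0) - (if (x : ℕ) = j then 1 else 0)

lemma eval_sum (n : ℕ) (g : ℕ → ℚ) (x : Fin n) :
    (∑ j ∈ Finset.Icc 1 (n-1), g j • alphaC n j) x
      = (if (x:ℕ) + 1 ≤ n - 1 then g ((x:ℕ)+1) else 0)
        - (if 1 ≤ (x:ℕ) then g (x:ℕ) else 0) := by
  have hxlt : (x:ℕ) < n := x.isLt
  simp only [Finset.sum_apply, Pi.smul_apply, alphaC, smul_eq_mul, mul_sub]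
  rw [Finset.sum_sub_distrib]
  congr 1
  · rw [Finset.sum_congr rfl (g := fun j => if j = (x:ℕ)+1 then g j else 0) ?_,
      Finset.sum_ite_eq' (Finset.Icc 1 (n-1)) ((x:ℕ)+1) g]
    · simp [Finset.mem_Icc]
    · intro j hj
      rw [Finset.mem_Icc] at hj
      by_cases h : (x:ℕ) = j - 1
      · have h2 : j = (x:ℕ)+1 := by omega
        simp only [if_pos h, if_pos h2, mul_one]
      · have h2 : j ≠ (x:ℕ)+1 := by omega
        simp only [if_neg h, if_neg h2, mul_zero]
  · rw [Finset.sum_congr rfl (g := fun j => if j = (x:ℕ) then g j else 0) ?_,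
      Finset.sum_ite_eq' (Finset.Icc 1 (n-1)) ((x:ℕ)) g]
    · simp only [Finset.mem_Icc]
      have hx1 : ((x:ℕ) ≤ n - 1) := by omega
      simp [hx1]
    · intro j hj
      by_cases h : (x:ℕ) = j
      · simp only [if_pos h, if_pos h.symm, mul_one]
      · simp only [if_neg h, if_neg (Ne.symm h), mul_zero]

lemma reindex (n : ℕ) (hn : 2 ≤ n) (g : ℕ → ℚ) :
    ∑ i ∈ Finset.Icc 1 (n-1), g i • alphaC n (n-i)
      = ∑ j ∈ Finset.Icc 1 (n-1), g (n-j) • alphaC n j := by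
  refine Finset.sum_nbij' (fun i => n - i) (fun j => n - j) ?_ ?_ ?_ ?_ ?_ <;>
    intro a ha <;> rw [Finset.mem_Icc] at ha
  · rw [Finset.mem_Icc]; omega
  · rw [Finset.mem_Icc]; omega
  · omega
  · omega
  · have : n - (n - a) = a := by omega
    rw [this]

lemma varpi_eq (n k : ℕ) (hn : 2 ≤ n) :
    ((k * n : ℕ) : ℚ) • varpi n 1
      = ∑ j ∈ Finset.Icc 1 (n-1), ((k:ℚ) * ((n:ℚ) - (j:ℚ))) • alphaC n j := by
  have hn0 : (n:ℚ) ≠ 0 := by positivity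
  funext x
  rw [show (∑ j ∈ Finset.Icc 1 (n-1), ((k:ℚ) * ((n:ℚ) - (j:ℚ))) • alphaC n j)
      = ∑ j ∈ Finset.Icc 1 (n-1), (fun j : ℕ => (k:ℚ) * ((n:ℚ) - (j:ℚ))) j • alphaC n j from rfl,
    eval_sum]
  have hxlt : (x:ℕ) < n := x.isLt
  simp only [Pi.smul_apply, varpi, smul_eq_mul]
  by_cases h0 : (x:ℕ) < 1
  · have hx0 : (x:ℕ) = 0 := by omega
    have h1 : (0:ℕ) + 1 ≤ n - 1 := by omega
    rw [if_pos h0, hx0, if_pos h1, if_neg (by omega)]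
    push_cast
    field_simp
    ring
  · rw [if_neg h0, if_pos (by omega : 1 ≤ (x:ℕ))]
    by_cases h1 : (x:ℕ) + 1 ≤ n - 1
    · rw [if_pos h1]
      push_cast
      field_simp
      ring
    · rw [if_neg h1]
      have hx : (x:ℕ) = n - 1 := by omega
      rw [hx]
      have : ((n-1:ℕ):ℚ) = (n:ℚ) - 1 := by
        push_cast [Nat.cast_sub (by omega : 1 ≤ n)]; ring
      rw [this]
      push_cast
      field_simp
      ring

/-- For a dominant coweight `λ = ∑_i m_i α_{i*}` of `SL_n` (`m_i ≥ 0`) and a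
positive integer `k`, one has `λ ≤ k n ϖ_1` if and only if `k ≥ m_1`. -/
theorem le_kn_varpi_one_iff (n k : ℕ) (hn : 2 ≤ n) (hk : 1 ≤ k) (m : ℕ → ℕ)
    (hdom : ∀ a b : Fin n, a ≤ b →
      (∑ i ∈ Finset.Icc 1 (n - 1), (m i : ℚ) • alphaC n (n - i)) b ≤
      (∑ i ∈ Finset.Icc 1 (n - 1), (m i : ℚ) • alphaC n (n - i)) a) :
    (∃ c : ℕ → ℕ,
      ((k * n : ℕ) : ℚ) • varpi n 1 -
          ∑ i ∈ Finset.Icc 1 (n - 1), (m i : ℚ) • alphaC n (n - i) =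
        ∑ j ∈ Finset.Icc 1 (n - 1), (c j : ℚ) • alphaC n j) ↔ m 1 ≤ k := by
  have hn0 : (n:ℚ) ≠ 0 := by positivity
  set M : ℕ → ℚ := fun i => if 1 ≤ i ∧ i ≤ n - 1 then (m i : ℚ) else 0 with hM
  have hMval : ∀ i, 1 ≤ i → i ≤ n - 1 → M i = (m i : ℚ) := by
    intro i h1 h2; simp [hM, h1, h2]
  have hM0 : ∀ i, (i = 0 ∨ n - 1 < i) → M i = 0 := by
    intro i h
    have : ¬ (1 ≤ i ∧ i ≤ n - 1) := by omega
    simp [hM, this]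
  have hlam : ∀ x : Fin n,
      (∑ i ∈ Finset.Icc 1 (n - 1), (m i : ℚ) • alphaC n (n - i)) x
        = M (n - 1 - (x:ℕ)) - M (n - (x:ℕ)) := by
    intro x
    have hxlt : (x:ℕ) < n := x.isLt
    rw [reindex n hn (fun i => (m i : ℚ))]
    rw [eval_sum n (fun j => (m (n - j) : ℚ)) x]
    congr 1
    · by_cases h : (x:ℕ) + 1 ≤ n - 1
      · rw [if_pos h, show n - 1 - (x:ℕ) = n - ((x:ℕ)+1) from by omega,
          hMval _ (by omega) (by omega)]
      · rw [if_neg h, hM0 _ (by omega)]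
    · by_cases h : 1 ≤ (x:ℕ)
      · rw [if_pos h, hMval _ (by omega) (by omega)]
      · rw [if_neg h, hM0 _ (by omega)]
  have hconc : ∀ j, 1 ≤ j → j ≤ n - 1 → M (j+1) - M j ≤ M j - M (j-1) := by
    intro j h1 h2
    have ha : n - 1 - j < n := by omega
    have hb : n - j < n := by omega
    have hle : (⟨n-1-j, ha⟩ : Fin n) ≤ ⟨n-j, hb⟩ := by
      simp only [Fin.le_def]; omega
    have h := hdom ⟨n-1-j, ha⟩ ⟨n-j, hb⟩ hle
    rw [hlam, hlam] at h
    simp only at h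
    rw [show n-1-(n-j) = j-1 by omega, show n-(n-j) = j by omega,
        show n-1-(n-1-j) = j by omega, show n-(n-1-j) = j+1 by omega] at h
    linarith
  have hD : ∀ j, 1 ≤ j → j ≤ n → M j - M (j-1) ≤ M 1 := by
    intro j
    induction j with
    | zero => omega
    | succ i ih =>
      intro h1 h2
      by_cases hi : i = 0
      · subst hi
        have := hM0 0 (Or.inl rfl)
        simp [this]
      · have hc := hconc i (by omega) (by omega)
        have hih := ih (by omega) (by omega)
        rw [show i + 1 - 1 = i from rfl]
        linarith
  have hMle : ∀ i, i ≤ n → M i ≤ (i:ℚ) * M 1 := by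
    intro i
    induction i with
    | zero => intro _; simp [hM0 0 (Or.inl rfl)]
    | succ i ih =>
      intro h
      have h1 := hD (i+1) (by omega) h
      have h2 := ih (by omega)
      rw [show i + 1 - 1 = i from rfl] at h1
      push_cast
      linarith
  have hmle : ∀ i, 1 ≤ i → i ≤ n - 1 → (m i : ℚ) ≤ (i:ℚ) * (m 1 : ℚ) := by
    intro i h1 h2
    have h := hMle i (by omega)
    rwa [hMval i h1 h2, hMval 1 le_rfl (by omega)] at h
  constructor
  · rintro ⟨c, hc⟩
    have hx : n - 1 < n := by omega
    have h := congrFun hc ⟨n-1, hx⟩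
    rw [Pi.sub_apply, hlam] at h
    rw [eval_sum n (fun j => (c j : ℚ))] at h
    simp only [Pi.smul_apply, varpi, smul_eq_mul] at h
    split_ifs at h with h1 h2 h3 <;> try omega
    rw [show n - 1 - (n-1) = 0 by omega, show n - (n-1) = 1 by omega,
      hM0 0 (Or.inl rfl), hMval 1 le_rfl (by omega)] at h
    have hval : ((k*n : ℕ) : ℚ) * (-(((1:ℕ):ℚ) / (n:ℚ))) = -(k:ℚ) := by
      push_cast
      field_simp
    rw [hval] at h
    have hcnn : (0:ℚ) ≤ (c (n-1) : ℚ) := by positivity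
    have : (m 1 : ℚ) ≤ (k : ℚ) := by linarith
    exact_mod_cast this
  · intro hm1k
    refine ⟨fun j => k * (n - j) - m (n - j), ?_⟩
    rw [varpi_eq n k hn, reindex n hn (fun i => (m i : ℚ)), ← Finset.sum_sub_distrib]
    refine Finset.sum_congr rfl ?_
    intro j hj
    rw [Finset.mem_Icc] at hj
    rw [← sub_smul]
    congr 1
    have hmj : m (n - j) ≤ k * (n - j) := by
      have h1 := hmle (n - j) (by omega) (by omega)
      have h2 : m (n-j) ≤ (n-j) * m 1 := by exact_mod_cast h1
      calc m (n-j) ≤ (n-j) * m 1 := h2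
        _ ≤ (n-j) * k := Nat.mul_le_mul_left _ hm1k
        _ = k * (n-j) := Nat.mul_comm _ _
    rw [Nat.cast_sub hmj]
    push_cast [Nat.cast_sub (show j ≤ n by omega)]
    ring
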